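/- Let s, t be positive real numbers with s/t irrational. The quasisphere S²_{s,t} = S³_{s,t}/N, i.e. the orbit space of the ellipsoid S³_{s,t} under the componentwise action of N = {(e^{2πisθ}, e^{2πitθ}) : θ ∈ ℝ}, equipped with the quotient topology, is not a Hausdorff topological space. -/

import Mathlib

open Complex

/-- `expc x = e^{2πix}`. -/
noncomputable def expc (x : ℝ) : ℂ := Complex.exp (2 * Real.pi * Complex.I * x)

lemma expc_add (u v : ℝ) : expc (u + v) = expc u * expc v := by
  simp [expc, ← Complex.exp_add]; ring_nf

lemma expc_zero : expc 0 = 1 := by simp [expc]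

lemma abs_expc (x : ℝ) : ‖expc x‖ = 1 := by
  rw [expc, Complex.norm_exp]
  simp

lemma expc_continuous : Continuous expc := by
  exact Complex.continuous_exp.comp (by continuity)

lemma expc_eq_one_iff (x : ℝ) : expc x = 1 ↔ ∃ n : ℤ, x = n := by
  rw [expc, Complex.exp_eq_one_iff]
  constructor
  · rintro ⟨n, hn⟩
    refine ⟨n, ?_⟩
    have h2 : (2 * Real.pi * Complex.I : ℂ) ≠ 0 := by
      simp [Complex.I_ne_zero, Real.pi_ne_zero]
    have : (x : ℂ) = (n : ℂ) := by
      apply mul_left_cancel₀ h2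
      rw [hn]; ring
    exact_mod_cast this
  · rintro ⟨n, rfl⟩
    exact ⟨n, by push_cast; ring⟩

lemma expc_int (n : ℤ) : expc n = 1 := (expc_eq_one_iff _).2 ⟨n, rfl⟩

lemma expc_half : expc (1/2 : ℝ) = -1 := by
  rw [expc]
  have : (2 * Real.pi * Complex.I * (((1:ℝ)/2 : ℝ) : ℂ) : ℂ) = Real.pi * Complex.I := by
    push_cast; ring
  rw [this, Complex.exp_pi_mul_I]

lemma expc_eq_neg_one_iff (x : ℝ) : expc x = -1 ↔ ∃ n : ℤ, x = n + 1/2 := by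
  constructor
  · intro h
    have : expc (x - 1/2) = 1 := by
      have := expc_add (x - 1/2) (1/2)
      simp only [sub_add_cancel] at this
      rw [h, expc_half] at this
      linear_combination this
    obtain ⟨n, hn⟩ := (expc_eq_one_iff _).1 this
    exact ⟨n, by linarith⟩
  · rintro ⟨n, rfl⟩
    rw [expc_add, expc_int, expc_half, one_mul]

/-- The ellipsoid `S³_{s,t} = {(z,w) ∈ ℂ² : s|z|² + t|w|² = st}`. -/
def ellipsoidR (s t : ℝ) : Set (ℂ × ℂ) :=
  {z | s * ‖z.1‖ ^ 2 + t * ‖z.2‖ ^ 2 = s * t}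

/-- Orbit relation of the componentwise action of `N = {(e^{2πisθ}, e^{2πitθ}) : θ ∈ ℝ}`
on the ellipsoid `S³_{s,t}`. -/
noncomputable def orbitRelR (s t : ℝ) (x y : ellipsoidR s t) : Prop :=
  ∃ θ : ℝ, (y : ℂ × ℂ) = (expc (s * θ) * (x : ℂ × ℂ).1, expc (t * θ) * (x : ℂ × ℂ).2)

lemma orbitRel_equiv (s t : ℝ) : Equivalence (orbitRelR s t) := by
  constructor
  · intro x
    exact ⟨0, by simp [expc_zero]⟩
  · rintro x y ⟨θ, h⟩
    refine ⟨-θ, ?_⟩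
    rw [h]
    have e1 : expc (s * -θ) * expc (s * θ) = 1 := by
      rw [← expc_add]; ring_nf; exact expc_zero
    have e2 : expc (t * -θ) * expc (t * θ) = 1 := by
      rw [← expc_add]; ring_nf; exact expc_zero
    apply Prod.ext <;> simp only
    · calc (x : ℂ × ℂ).1 = (expc (s * -θ) * expc (s * θ)) * (x : ℂ × ℂ).1 := by rw [e1, one_mul]
        _ = expc (s * -θ) * (expc (s * θ) * (x : ℂ × ℂ).1) := by ring
    · calc (x : ℂ × ℂ).2 = (expc (t * -θ) * expc (t * θ)) * (x : ℂ × ℂ).2 := by rw [e2, one_mul]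
        _ = expc (t * -θ) * (expc (t * θ) * (x : ℂ × ℂ).2) := by ring
  · rintro x y z ⟨θ, h⟩ ⟨θ', h'⟩
    refine ⟨θ + θ', ?_⟩
    rw [h', h]
    have e1 : s * (θ + θ') = s * θ' + s * θ := by ring
    have e2 : t * (θ + θ') = t * θ' + t * θ := by ring
    apply Prod.ext <;> simp only
    · rw [e1, expc_add]; ring
    · rw [e2, expc_add]; ring

/-- For `s, t > 0` with `s/t` irrational, the quasisphere `S²_{s,t} = S³_{s,t}/N`, with
the quotient topology, is not a Hausdorff topological space. -/
theorem quasisphere_not_hausdorff (s t : ℝ) (hs : 0 < s) (ht : 0 < t)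
    (hst : Irrational (s / t)) :
    ¬ T2Space (Quot (orbitRelR s t)) := by
  intro h2
  set a := Real.sqrt (t / 2) with ha_def
  set b := Real.sqrt (s / 2) with hb_def
  have ha : 0 < a := Real.sqrt_pos.2 (by positivity)
  have hb : 0 < b := Real.sqrt_pos.2 (by positivity)
  have ha2 : a ^ 2 = t / 2 := Real.sq_sqrt (by positivity)
  have hb2 : b ^ 2 = s / 2 := Real.sq_sqrt (by positivity)
  have hmem : ∀ c : ℂ, ‖c‖ = 1 → ((c * (a : ℂ), (b : ℂ)) ∈ ellipsoidR s t) := by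
    intro c hc
    simp only [ellipsoidR, Set.mem_setOf_eq, norm_mul, hc, one_mul, Complex.norm_real, Real.norm_eq_abs,
      abs_of_pos ha, abs_of_pos hb]
    rw [ha2, hb2]; ring
  set x : ellipsoidR s t := ⟨((a : ℂ), (b : ℂ)), by simpa using hmem 1 (by simp)⟩ with hx_def
  set y : ellipsoidR s t := ⟨(-(a : ℂ), (b : ℂ)), by
    have := hmem (-1) (by simp)
    simpa using this⟩ with hy_def
  set C : Set (ellipsoidR s t) := Quot.mk (orbitRelR s t) ⁻¹' {Quot.mk _ x} with hC_def
  have hC : IsClosed C := isClosed_singleton.preimage continuous_quot_mk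
  -- density of ℤ(s/t) + ℤ in ℝ
  set S : AddSubgroup ℝ := AddSubgroup.zmultiples (s / t) ⊔ AddSubgroup.zmultiples 1 with hS_def
  have hdense : Dense (S : Set ℝ) := by
    rcases S.dense_or_cyclic with h | ⟨α, hα⟩
    · exact h
    · exfalso
      have h1 : (s / t) ∈ S := le_sup_left (α := AddSubgroup ℝ) (AddSubgroup.mem_zmultiples _)
      have h1' : (1 : ℝ) ∈ S := le_sup_right (α := AddSubgroup ℝ) (AddSubgroup.mem_zmultiples _)
      rw [hα, AddSubgroup.mem_closure_singleton] at h1 h1'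
      obtain ⟨n, hn⟩ := h1
      obtain ⟨m, hm⟩ := h1'
      rw [zsmul_eq_mul] at hn hm
      have hm0 : (m : ℝ) ≠ 0 := by
        rintro h
        rw [h, zero_mul] at hm
        exact one_ne_zero hm.symm
      apply hst
      refine ⟨(n : ℚ) / (m : ℚ), ?_⟩
      push_cast
      rw [div_eq_iff hm0, ← hn]
      linear_combination (-(n : ℝ)) * hm
  have hbne : ((b : ℝ) : ℂ) ≠ 0 := Complex.ofReal_ne_zero.2 hb.ne'
  have hane : ((a : ℝ) : ℂ) ≠ 0 := Complex.ofReal_ne_zero.2 ha.ne'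
  -- y ∈ C
  have hyC : y ∈ C := by
    rw [← hC.closure_eq]
    rw [Metric.mem_closure_iff]
    intro ε hε
    obtain ⟨δ, hδ, hcont⟩ := Metric.continuousAt_iff.1 expc_continuous.continuousAt
      (ε := ε / a) (by positivity)
    have h12 : (1 / 2 : ℝ) ∈ closure (S : Set ℝ) := hdense _
    obtain ⟨g, hgS, hgdist⟩ := Metric.mem_closure_iff.1 h12 δ hδ
    obtain ⟨u, hu, v, hv, huv⟩ := AddSubgroup.mem_sup.1 hgS
    obtain ⟨n, hn⟩ := AddSubgroup.mem_zmultiples_iff.1 hu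
    obtain ⟨m, hm⟩ := AddSubgroup.mem_zmultiples_iff.1 hv
    set z : ellipsoidR s t := ⟨(expc g * (a : ℂ), (b : ℂ)), hmem _ (abs_expc g)⟩ with hz_def
    refine ⟨z, ?_, ?_⟩
    · -- z ∈ C, via θ = n / t
      rw [zsmul_eq_mul] at hn
      rw [zsmul_eq_mul, mul_one] at hm
      have hg : g = (n : ℝ) * (s / t) + ((m : ℤ) : ℝ) := by rw [← huv, ← hn, ← hm]
      have hrel : orbitRelR s t x z := by
        refine ⟨n / t, ?_⟩
        have e3 : expc (s * ((n : ℝ) / t)) = expc g := by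
          have h1 : s * ((n : ℝ) / t) = (n : ℝ) * (s / t) := by field_simp
          rw [h1, hg, expc_add, expc_int, mul_one]
        have e4 : expc (t * ((n : ℝ) / t)) = 1 := by
          have h1 : t * ((n : ℝ) / t) = ((n : ℤ) : ℝ) := by field_simp
          rw [h1, expc_int]
        show (z : ℂ × ℂ) = _
        rw [e3, e4, one_mul]
      have hq : Quot.mk (orbitRelR s t) z = Quot.mk (orbitRelR s t) x := (Quot.sound hrel).symm
      simp only [hC_def, Set.mem_preimage, Set.mem_singleton_iff]
      exact hq
    · -- dist y z < ε
      have hd : dist y z = dist (expc g) (-1) * a := by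
        rw [Subtype.dist_eq, Prod.dist_eq]
        show max (dist (-((a : ℝ) : ℂ)) (expc g * ((a : ℝ) : ℂ))) (dist ((b : ℝ) : ℂ) ((b : ℝ) : ℂ)) = _
        rw [dist_self, max_eq_left dist_nonneg, Complex.dist_eq, Complex.dist_eq]
        have h1 : -((a : ℝ) : ℂ) - expc g * ((a : ℝ) : ℂ) = -(expc g - -1) * ((a : ℝ) : ℂ) := by ring
        rw [h1, norm_mul, Complex.norm_real, Real.norm_eq_abs, abs_of_pos ha, norm_neg]
      rw [hd]
      have : dist (expc g) (-1) < ε / a := by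
        have := hcont (x := g) (by rwa [dist_comm] at hgdist)
        rwa [expc_half] at this
      calc dist (expc g) (-1) * a < (ε / a) * a := by
            exact mul_lt_mul_of_pos_right this ha
        _ = ε := by field_simp
  -- derive the contradiction
  have hmk : Quot.mk (orbitRelR s t) y = Quot.mk (orbitRelR s t) x := hyC
  have hrel : orbitRelR s t y x :=
    (orbitRel_equiv s t).eqvGen_iff.1 (Quot.eqvGen_exact hmk)
  obtain ⟨θ, hθ⟩ := hrel
  have h1 : ((a : ℝ) : ℂ) = expc (s * θ) * (-((a : ℝ) : ℂ)) := congrArg Prod.fst hθ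
  have h2 : ((b : ℝ) : ℂ) = expc (t * θ) * ((b : ℝ) : ℂ) := congrArg Prod.snd hθ
  have he2 : expc (t * θ) = 1 :=
    mul_right_cancel₀ hbne (by rw [one_mul]; exact h2.symm)
  have he1 : expc (s * θ) = -1 := by
    apply mul_right_cancel₀ hane
    have h3 : expc (s * θ) * ((a : ℝ) : ℂ) = -((a : ℝ) : ℂ) := by linear_combination h1
    rw [h3]; ring
  obtain ⟨m, hm⟩ := (expc_eq_one_iff _).1 he2
  obtain ⟨k, hk⟩ := (expc_eq_neg_one_iff _).1 he1
  have hθ0 : θ ≠ 0 := by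
    rintro rfl
    rw [mul_zero] at hk
    have : (2 * k : ℝ) = -1 := by linarith
    have : (2 * k : ℤ) = -1 := by exact_mod_cast this
    omega
  have hm0 : (m : ℝ) ≠ 0 := by
    rw [← hm]
    exact mul_ne_zero ht.ne' hθ0
  apply hst
  refine ⟨(2 * (k : ℚ) + 1) / (2 * (m : ℚ)), ?_⟩
  push_cast
  rw [div_eq_div_iff (mul_ne_zero two_ne_zero hm0) ht.ne']
  linear_combination 2 * s * hm - 2 * t * hk
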